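/- arXiv:1309.0975 — 2 statements merged into one kernel-verified Lean document; each statement's English description precedes it below -/
import Mathlib

section
/- For the Lie algebra with brackets [e₂,e₃]=[e₁,e₄]=e₂, [e₂,e₁]=[e₄,e₃]=e₄ and metric g(x,y)=x¹y¹+x²y²-x³y³-x⁴y⁴, the Levi-Civita connection (Koszul formula) satisfies ∇J₁ = 0 for the standard structure J₁, i.e. ∇ₓ(J₁y) = J₁(∇ₓy) for all x,y; in particular F₁(x,y,z) = g((∇ₓJ₁)y,z) vanishes identically. -/
noncomputable section

/-- The underlying 4-dimensional real vector space. -/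
abbrev V : Type := Fin 4 → ℝ

/-- The standard basis of ℝ⁴. -/
def e : Fin 4 → V := fun i => Pi.single i 1

/-- The neutral metric g(x,y) = x¹y¹ + x²y² - x³y³ - x⁴y⁴. -/
def g (x y : V) : ℝ := x 0 * y 0 + x 1 * y 1 - x 2 * y 2 - x 3 * y 3

/-- J₁ of the standard hypercomplex structure. -/
def J1 (x : V) : V := ![-x 1, x 0, x 3, -x 2]

/-- J₂ of the standard hypercomplex structure. -/
def J2 (x : V) : V := ![-x 2, -x 3, x 0, x 1]

/-- J₃ of the standard hypercomplex structure. -/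
def J3 (x : V) : V := ![x 3, -x 2, x 1, -x 0]

/-- The bracket of type (hc3), case of signature (1,1):
[e₂,e₃]=[e₁,e₄]=e₂, [e₂,e₁]=[e₄,e₃]=e₄. -/
def br (x y : V) : V :=
  ![0, x 1 * y 2 - x 2 * y 1 + x 0 * y 3 - x 3 * y 0, 0,
    x 1 * y 0 - x 0 * y 1 + x 3 * y 2 - x 2 * y 3]

lemma g_nondeg (w : V) (h : ∀ z : V, g w z = 0) : w = 0 := by
  funext i
  fin_cases i
  · have := h ![1,0,0,0]; simp [g] at this; simpa using this
  · have := h ![0,1,0,0]; simp [g] at this; simpa using this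
  · have := h ![0,0,1,0]; simp [g] at this; simpa using this
  · have := h ![0,0,0,1]; simp [g] at this; simpa using this

lemma key (nabla : V →ₗ[ℝ] V →ₗ[ℝ] V)
    (hK : ∀ x y z : V,
      2 * g (nabla x y) z = g (br x y) z + g (br z x) y + g (br z y) x) :
    ∀ x y z : V, g (nabla x (J1 y) - J1 (nabla x y)) z = 0 := by
  intro x y z
  have hskew : ∀ u : V, g (J1 u) z = -g u (J1 z) := by
    intro u; simp [g, J1]; ring
  have h1 := hK x (J1 y) z
  have h2 := hK x y (J1 z)
  have hg : ∀ a b c : V, g (a - b) c = g a c - g b c := by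
    intro a b c; simp [g, Pi.sub_apply]; ring
  rw [hg, hskew (nabla x y)]
  have hbr : g (br x (J1 y)) z + g (br z x) (J1 y) + g (br z (J1 y)) x
      = -(g (br x y) (J1 z) + g (br (J1 z) x) y + g (br (J1 z) y) x) := by
    simp [g, br, J1]; ring
  nlinarith [h1, h2, hbr]

/-- For the (hc3) Lie algebra, ∇J₁ = 0, i.e. F₁ vanishes identically. -/
theorem hc3_J1_parallel (nabla : V →ₗ[ℝ] V →ₗ[ℝ] V)
    (hK : ∀ x y z : V,
      2 * g (nabla x y) z = g (br x y) z + g (br z x) y + g (br z y) x) :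
    (∀ x y : V, nabla x (J1 y) = J1 (nabla x y)) ∧
    (∀ x y z : V, g (nabla x (J1 y) - J1 (nabla x y)) z = 0) := by
  refine ⟨fun x y => ?_, key nabla hK⟩
  have := g_nondeg _ (key nabla hK x y)
  have h := sub_eq_zero.mp this
  exact h
end
end

section
/- For the Lie algebra of type (hc3) with brackets [e₂,e₃]=[e₁,e₄]=e₂, [e₂,e₁]=[e₄,e₃]=e₄, the Lee forms satisfy θ₁ = 0 and the only nonzero components of θ₂, θ₃ are θ₂(e₁) = θ₃(e₂) = 4. -/
noncomputable section

/-- Structure tensor F(x,y,z) = g((∇ₓJ)y, z) = g(∇ₓ(Jy) - J(∇ₓy), z). -/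
def F (J : V → V) (nabla : V → V → V) (x y z : V) : ℝ :=
  g (nabla x (J y) - J (nabla x y)) z

/-- Lee form θ(z) = Σᵢ gⁱⁱ F(eᵢ,eᵢ,z) with gⁱⁱ = (1,1,-1,-1). -/
def theta (J : V → V) (nabla : V → V → V) (z : V) : ℝ :=
  F J nabla (e 0) (e 0) z + F J nabla (e 1) (e 1) z
    - F J nabla (e 2) (e 2) z - F J nabla (e 3) (e 3) z
lemma e0 : e 0 = ![1,0,0,0] := by funext i; fin_cases i <;> simp [e]
lemma e1 : e 1 = ![0,1,0,0] := by funext i; fin_cases i <;> simp [e]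
lemma e2 : e 2 = ![0,0,1,0] := by funext i; fin_cases i <;> simp [e]
lemma e3 : e 3 = ![0,0,0,1] := by funext i; fin_cases i <;> simp [e]

lemma g_sub (a b z : V) : g (a - b) z = g a z - g b z := by
  simp [g]; ring

lemma gJ1 (v w : V) : g (J1 v) w = -(g v (J1 w)) := by
  simp [g, J1]; ring

lemma gJ2 (v w : V) : g (J2 v) w = g v (J2 w) := by
  simp [g, J2]; ring

lemma gJ3 (v w : V) : g (J3 v) w = g v (J3 w) := by
  simp [g, J3]; ring

/-- Lee forms of the (hc3) structure: θ₁ = 0 and θ₂(e₁)=θ₃(e₂)=4 are the only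
nonzero components of θ₂, θ₃. -/
theorem hc3_lee_forms (nabla : V → V → V)
    (hK : ∀ x y z : V,
      2 * g (nabla x y) z = g (br x y) z + g (br z x) y + g (br z y) x) :
    (∀ z : V, theta J1 nabla z = 0) ∧
    (∀ i : Fin 4, theta J2 nabla (e i) = if i = 0 then 4 else 0) ∧
    (∀ i : Fin 4, theta J3 nabla (e i) = if i = 1 then 4 else 0) := by
  have hF : ∀ (J : V → V) (s : ℝ), (∀ v w, g (J v) w = s * g v (J w)) →
      ∀ x y z : V, 2 * F J nabla x y z =
        (g (br x (J y)) z + g (br z x) (J y) + g (br z (J y)) x)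
        - s * (g (br x y) (J z) + g (br (J z) x) y + g (br (J z) y) x) := by
    intro J s hadj x y z
    have h1 := hK x (J y) z
    have h2 := hK x y (J z)
    have h3 := hadj (nabla x y) z
    unfold F
    rw [g_sub, h3]
    linear_combination h1 - s * h2
  have hF1 := hF J1 (-1) (fun v w => by rw [gJ1]; ring)
  have hF2 := hF J2 1 (fun v w => by rw [gJ2]; ring)
  have hF3 := hF J3 1 (fun v w => by rw [gJ3]; ring)
  have t1 : ∀ z : V, 2 * theta J1 nabla z = 0 := by
    intro z
    have h0 := hF1 (e 0) (e 0) z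
    have h1 := hF1 (e 1) (e 1) z
    have h2 := hF1 (e 2) (e 2) z
    have h3 := hF1 (e 3) (e 3) z
    unfold theta
    simp only [e0, e1, e2, e3, g, br, J1, Matrix.cons_val_zero, Matrix.cons_val_one,
      Matrix.head_cons, Matrix.cons_val_two, Matrix.tail_cons, Matrix.cons_val_three,
      Matrix.cons_val_fin_one] at h0 h1 h2 h3 ⊢
    ring_nf at h0 h1 h2 h3
    linarith
  have t2 : ∀ z : V, 2 * theta J2 nabla z = 8 * z 0 := by
    intro z
    have h0 := hF2 (e 0) (e 0) z
    have h1 := hF2 (e 1) (e 1) z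
    have h2 := hF2 (e 2) (e 2) z
    have h3 := hF2 (e 3) (e 3) z
    unfold theta
    simp only [e0, e1, e2, e3, g, br, J2, Matrix.cons_val_zero, Matrix.cons_val_one,
      Matrix.head_cons, Matrix.cons_val_two, Matrix.tail_cons, Matrix.cons_val_three,
      Matrix.cons_val_fin_one] at h0 h1 h2 h3 ⊢
    ring_nf at h0 h1 h2 h3
    linarith
  have t3 : ∀ z : V, 2 * theta J3 nabla z = 8 * z 1 := by
    intro z
    have h0 := hF3 (e 0) (e 0) z
    have h1 := hF3 (e 1) (e 1) z
    have h2 := hF3 (e 2) (e 2) z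
    have h3 := hF3 (e 3) (e 3) z
    unfold theta
    simp only [e0, e1, e2, e3, g, br, J3, Matrix.cons_val_zero, Matrix.cons_val_one,
      Matrix.head_cons, Matrix.cons_val_two, Matrix.tail_cons, Matrix.cons_val_three,
      Matrix.cons_val_fin_one] at h0 h1 h2 h3 ⊢
    ring_nf at h0 h1 h2 h3
    linarith
  refine ⟨fun z => by linarith [t1 z], ?_, ?_⟩
  · intro i
    have h0 := t2 (e 0); have h1 := t2 (e 1); have h2 := t2 (e 2); have h3 := t2 (e 3)
    rw [e0] at h0; rw [e1] at h1; rw [e2] at h2; rw [e3] at h3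
    norm_num at h0 h1 h2 h3
    have hi : i = 0 ∨ i = 1 ∨ i = 2 ∨ i = 3 := by omega
    rcases hi with rfl | rfl | rfl | rfl <;> simp only [e0, e1, e2, e3, Fin.reduceEq, if_true, if_false, reduceIte] <;> linarith
  · intro i
    have h0 := t3 (e 0); have h1 := t3 (e 1); have h2 := t3 (e 2); have h3 := t3 (e 3)
    rw [e0] at h0; rw [e1] at h1; rw [e2] at h2; rw [e3] at h3
    norm_num at h0 h1 h2 h3
    have hi : i = 0 ∨ i = 1 ∨ i = 2 ∨ i = 3 := by omega
    rcases hi with rfl | rfl | rfl | rfl <;> simp only [e0, e1, e2, e3, Fin.reduceEq, if_true, if_false, reduceIte] <;> linarith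
end
end
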